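/- Let 1 ≤ r < d, let G be a Gaussian mixture density with k components on ℝ^r, and let γ(v) = (2π)^{−(d−r)/2} det(Θ)^{−1/2} exp(−(1/2) vᵀ Θ^{-1} v) be a centered Gaussian density on ℝ^{d−r} with positive definite covariance Θ. Then Φ̃(u,v) = G(u) γ(v) is a Gaussian mixture density with k components on ℝ^d, it is homoscedastic whenever G is homoscedastic, and its modal set satisfies Mode(Φ̃) = Mode(G) × {0}. In particular, if Mode(G) is finite then Mode(Φ̃) is finite with the same cardinality, and isolated modes of G lift to isolated modes of Φ̃. -/

import Mathlib

open scoped BigOperators RealInnerProductSpace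
open Matrix

/-- The density of a (nondegenerate) Gaussian with mean `μ` and covariance matrix `S`
on the Euclidean space indexed by `ι`. -/
noncomputable def gaussianPdf {ι : Type*} [Fintype ι] [DecidableEq ι]
    (μ : EuclideanSpace ℝ ι) (S : Matrix ι ι ℝ) (x : EuclideanSpace ℝ ι) : ℝ :=
  (2 * Real.pi) ^ (-(Fintype.card ι : ℝ) / 2) * S.det ^ (-(1 : ℝ) / 2) *
    Real.exp (-(1 / 2 : ℝ) * ((fun i => x i - μ i) ⬝ᵥ (S⁻¹ *ᵥ (fun i => x i - μ i))))

/-- A `k`-component Gaussian mixture density. -/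
noncomputable def mixturePdf {ι : Type*} [Fintype ι] [DecidableEq ι] {k : ℕ}
    (α : Fin k → ℝ) (μ : Fin k → EuclideanSpace ℝ ι) (S : Fin k → Matrix ι ι ℝ)
    (x : EuclideanSpace ℝ ι) : ℝ :=
  ∑ i, α i * gaussianPdf (μ i) (S i) x

/-- `Φ` is a Gaussian mixture density with weights `α`, means `μ`,
and (positive definite) covariance matrices `S`. -/
def IsGaussianMixture {ι : Type*} [Fintype ι] [DecidableEq ι] {k : ℕ}
    (Φ : EuclideanSpace ℝ ι → ℝ) (α : Fin k → ℝ) (μ : Fin k → EuclideanSpace ℝ ι)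
    (S : Fin k → Matrix ι ι ℝ) : Prop :=
  (∀ i, 0 < α i) ∧ (∑ i, α i) = 1 ∧ (∀ i, (S i).PosDef) ∧
    ∀ x, Φ x = mixturePdf α μ S x

/-- The Hessian matrix of `f : ℝ^ι → ℝ` at `x`. -/
noncomputable def hessianMatrix {ι : Type*} [Fintype ι] [DecidableEq ι]
    (f : EuclideanSpace ℝ ι → ℝ) (x : EuclideanSpace ℝ ι) : Matrix ι ι ℝ :=
  Matrix.of fun i j =>
    iteratedFDeriv ℝ 2 f x ![EuclideanSpace.single i 1, EuclideanSpace.single j 1]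

set_option linter.unusedSectionVars false

section Aux

variable {ι κ : Type*} [Fintype ι] [DecidableEq ι] [Fintype κ] [DecidableEq κ]

lemma gaussianPdf_pos (μ : EuclideanSpace ℝ ι) {S : Matrix ι ι ℝ} (hS : S.PosDef)
    (x : EuclideanSpace ℝ ι) : 0 < gaussianPdf μ S x := by
  have h1 : (0:ℝ) < 2 * Real.pi := by positivity
  exact mul_pos (mul_pos (Real.rpow_pos_of_pos h1 _)
    (Real.rpow_pos_of_pos hS.det_pos _)) (Real.exp_pos _)

lemma posDef_fromBlocks {A : Matrix ι ι ℝ} {D : Matrix κ κ ℝ} (hA : A.PosDef) (hD : D.PosDef) :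
    (Matrix.fromBlocks A 0 0 D).PosDef := by
  refine Matrix.PosDef.of_dotProduct_mulVec_pos ?_ ?_
  · show (Matrix.fromBlocks A 0 0 D)ᴴ = _
    have hAt : Aᵀ = A := by have h : A.IsSymm := by simpa using hA.1
                            exact h
    have hDt : Dᵀ = D := by have h : D.IsSymm := by simpa using hD.1
                            exact h
    simp [Matrix.fromBlocks_transpose, hAt, hDt]
  · intro x hx
    have hxe : x = Sum.elim (x ∘ Sum.inl) (x ∘ Sum.inr) := (Sum.elim_comp_inl_inr x).symm
    rw [hxe, Matrix.fromBlocks_mulVec]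
    simp only [Sum.elim_comp_inl, Sum.elim_comp_inr, Matrix.zero_mulVec, add_zero, zero_add,
      star_trivial]
    rw [sumElim_dotProduct_sumElim]
    have hne : x ∘ Sum.inl ≠ 0 ∨ x ∘ Sum.inr ≠ 0 := by
      by_contra h
      push_neg at h
      apply hx
      funext w
      cases w with
      | inl i => exact congrFun h.1 i
      | inr j => exact congrFun h.2 j
    have hA' := hA.posSemidef
    have hD' := hD.posSemidef
    rcases hne with h | h
    · refine add_pos_of_pos_of_nonneg ?_ ?_
      · simpa using hA.dotProduct_mulVec_pos h
      · simpa using hD'.dotProduct_mulVec_nonneg (x ∘ Sum.inr)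
    · refine add_pos_of_nonneg_of_pos ?_ ?_
      · simpa using hA'.dotProduct_mulVec_nonneg (x ∘ Sum.inl)
      · simpa using hD.dotProduct_mulVec_pos h

lemma inv_fromBlocks {A : Matrix ι ι ℝ} {D : Matrix κ κ ℝ} (hA : A.PosDef) (hD : D.PosDef) :
    (Matrix.fromBlocks A 0 0 D)⁻¹ = Matrix.fromBlocks A⁻¹ 0 0 D⁻¹ := by
  apply Matrix.inv_eq_right_inv
  rw [Matrix.fromBlocks_multiply]
  simp [Matrix.mul_nonsing_inv _ (isUnit_iff_ne_zero.mpr hA.det_pos.ne'),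
    Matrix.mul_nonsing_inv _ (isUnit_iff_ne_zero.mpr hD.det_pos.ne'),
    Matrix.fromBlocks_one]

lemma gaussianPdf_prod (μ1 : EuclideanSpace ℝ ι) {A : Matrix ι ι ℝ} (hA : A.PosDef)
    (μ2 : EuclideanSpace ℝ κ) {D : Matrix κ κ ℝ} (hD : D.PosDef)
    (z : EuclideanSpace ℝ (ι ⊕ κ)) :
    gaussianPdf (WithLp.toLp 2 (Sum.elim μ1 μ2)) (Matrix.fromBlocks A 0 0 D) z =
      gaussianPdf μ1 A (WithLp.toLp 2 (fun i => z (Sum.inl i))) *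
        gaussianPdf μ2 D (WithLp.toLp 2 (fun j => z (Sum.inr j))) := by
  have h2π : (0:ℝ) < 2 * Real.pi := by positivity
  unfold gaussianPdf
  have hcard : (-(Fintype.card (ι ⊕ κ) : ℝ) / 2) =
      (-(Fintype.card ι : ℝ) / 2) + (-(Fintype.card κ : ℝ) / 2) := by
    rw [Fintype.card_sum]; push_cast; ring
  rw [hcard, Real.rpow_add h2π]
  rw [Matrix.det_fromBlocks_zero₂₁, Real.mul_rpow hA.det_pos.le hD.det_pos.le]
  have hw : (fun i => z i - (WithLp.toLp 2 (Sum.elim μ1 μ2) : EuclideanSpace ℝ (ι ⊕ κ)) i) =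
      Sum.elim (fun i => (WithLp.toLp 2 (fun i => z (Sum.inl i)) : EuclideanSpace ℝ ι) i - μ1 i)
        (fun j => (WithLp.toLp 2 (fun j => z (Sum.inr j)) : EuclideanSpace ℝ κ) j - μ2 j) := by
    funext w; cases w <;> rfl
  rw [hw, inv_fromBlocks hA hD, Matrix.fromBlocks_mulVec]
  simp only [Sum.elim_comp_inl, Sum.elim_comp_inr, Matrix.zero_mulVec, add_zero, zero_add]
  rw [sumElim_dotProduct_sumElim, mul_add, Real.exp_add]
  ring

lemma gaussianPdf_le_center {Θ : Matrix κ κ ℝ} (hΘ : Θ.PosDef) (v : EuclideanSpace ℝ κ) :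
    gaussianPdf 0 Θ v ≤ gaussianPdf 0 Θ (0 : EuclideanSpace ℝ κ) := by
  unfold gaussianPdf
  have hC : (0:ℝ) < (2 * Real.pi) ^ (-(Fintype.card κ : ℝ) / 2) * Θ.det ^ (-(1:ℝ) / 2) :=
    mul_pos (Real.rpow_pos_of_pos (by positivity) _) (Real.rpow_pos_of_pos hΘ.det_pos _)
  refine mul_le_mul_of_nonneg_left ?_ hC.le
  apply Real.exp_le_exp.mpr
  have h0 : (fun i => (0 : EuclideanSpace ℝ κ) i - (0 : EuclideanSpace ℝ κ) i) = (0 : κ → ℝ) := by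
    funext i; simp
  have hv : (fun i => v i - (0 : EuclideanSpace ℝ κ) i) = (v : κ → ℝ) := by
    funext i; simp
  rw [h0, hv]
  simp only [Matrix.mulVec_zero, dotProduct_zero, mul_zero]
  have hq : 0 ≤ v ⬝ᵥ Θ⁻¹ *ᵥ v := by simpa using hΘ.inv.posSemidef.dotProduct_mulVec_nonneg (WithLp.ofLp v)
  nlinarith

lemma gaussianPdf_lt_scale {Θ : Matrix κ κ ℝ} (hΘ : Θ.PosDef) {v : EuclideanSpace ℝ κ}
    (hv : v ≠ 0) {t : ℝ} (ht0 : 0 < t) (ht1 : t < 1) :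
    gaussianPdf 0 Θ v < gaussianPdf 0 Θ (t • v) := by
  unfold gaussianPdf
  have hC : (0:ℝ) < (2 * Real.pi) ^ (-(Fintype.card κ : ℝ) / 2) * Θ.det ^ (-(1:ℝ) / 2) :=
    mul_pos (Real.rpow_pos_of_pos (by positivity) _) (Real.rpow_pos_of_pos hΘ.det_pos _)
  refine mul_lt_mul_of_pos_left ?_ hC
  apply Real.exp_lt_exp.mpr
  have hv' : (fun i => v i - (0 : EuclideanSpace ℝ κ) i) = (v : κ → ℝ) := by
    funext i; simp
  have htv : (fun i => (t • v) i - (0 : EuclideanSpace ℝ κ) i) = t • (v : κ → ℝ) := by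
    funext i; simp [PiLp.smul_apply]
  rw [hv', htv]
  have hsc : (t • (v : κ → ℝ)) ⬝ᵥ Θ⁻¹ *ᵥ (t • (v : κ → ℝ)) = t^2 * (v ⬝ᵥ Θ⁻¹ *ᵥ v) := by
    rw [Matrix.mulVec_smul, smul_dotProduct, dotProduct_smul]
    simp [smul_eq_mul]; ring
  rw [hsc]
  have hvne : (v : κ → ℝ) ≠ 0 := by
    intro h; apply hv; ext i; exact congrFun h i
  have hq : 0 < v ⬝ᵥ Θ⁻¹ *ᵥ v := by simpa using hΘ.inv.dotProduct_mulVec_pos hvne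
  have ht2 : t ^ 2 < 1 := by nlinarith
  have := mul_lt_mul_of_pos_right ht2 hq
  nlinarith

/-- Left inclusion as a linear map. -/
noncomputable def sumElimL : EuclideanSpace ℝ ι →ₗ[ℝ] EuclideanSpace ℝ (ι ⊕ κ) where
  toFun w := (WithLp.toLp 2 (Sum.elim w 0) : EuclideanSpace ℝ (ι ⊕ κ))
  map_add' w w' := by
    ext x; cases x <;> simp [PiLp.add_apply, PiLp.zero_apply]
  map_smul' c w := by
    ext x; cases x <;> simp [PiLp.smul_apply, PiLp.zero_apply]

/-- Projection onto the first factor as a linear map. -/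
noncomputable def projLL : EuclideanSpace ℝ (ι ⊕ κ) →ₗ[ℝ] EuclideanSpace ℝ ι where
  toFun z := (WithLp.toLp 2 (fun i => z (Sum.inl i)) : EuclideanSpace ℝ ι)
  map_add' z z' := by ext i; simp [PiLp.add_apply]
  map_smul' c z := by ext i; simp [PiLp.smul_apply]

lemma continuous_sumElimL : Continuous (fun w : EuclideanSpace ℝ ι =>
    (WithLp.toLp 2 (Sum.elim w 0) : EuclideanSpace ℝ (ι ⊕ κ))) :=
  (sumElimL : EuclideanSpace ℝ ι →ₗ[ℝ] EuclideanSpace ℝ (ι ⊕ κ)).continuous_of_finiteDimensional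

lemma continuous_projL : Continuous (fun z : EuclideanSpace ℝ (ι ⊕ κ) =>
    (WithLp.toLp 2 (fun i => z (Sum.inl i)) : EuclideanSpace ℝ ι)) :=
  (projLL : EuclideanSpace ℝ (ι ⊕ κ) →ₗ[ℝ] EuclideanSpace ℝ ι).continuous_of_finiteDimensional

end Aux

/-- Proposition: dimension lifting preserves the modal set.
If $G$ is a $k$-component Gaussian mixture on $ℝ^r$ and $γ$ a centered Gaussian on
$ℝ^{d-r}$, then $Φ̃(u,v)=G(u)γ(v)$ is a $k$-component Gaussian mixture on
$ℝ^d ≅ ℝ^r × ℝ^{d-r}$, homoscedastic whenever $G$ is, with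
$\mathrm{Mode}(Φ̃)=\mathrm{Mode}(G)×\{0\}$; finiteness of the modal set and isolated modes
are preserved. -/
theorem dimension_lifting
    {r d k : ℕ} (hr : 1 ≤ r) (hrd : r < d)
    (α : Fin k → ℝ) (μ : Fin k → EuclideanSpace ℝ (Fin r))
    (S : Fin k → Matrix (Fin r) (Fin r) ℝ)
    (G : EuclideanSpace ℝ (Fin r) → ℝ)
    (hG : IsGaussianMixture G α μ S)
    (Θ : Matrix (Fin (d - r)) (Fin (d - r)) ℝ) (hΘ : Θ.PosDef)
    (Φt : EuclideanSpace ℝ (Fin r ⊕ Fin (d - r)) → ℝ)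
    (hΦt : ∀ z, Φt z =
      G (WithLp.toLp 2 (fun i => z (Sum.inl i))) *
        gaussianPdf (0 : EuclideanSpace ℝ (Fin (d - r))) Θ (WithLp.toLp 2 (fun j => z (Sum.inr j)))) :
    (∃ (α' : Fin k → ℝ) (μ' : Fin k → EuclideanSpace ℝ (Fin r ⊕ Fin (d - r)))
        (S' : Fin k → Matrix (Fin r ⊕ Fin (d - r)) (Fin r ⊕ Fin (d - r)) ℝ),
      IsGaussianMixture Φt α' μ' S' ∧
      ((∀ i j, S i = S j) → ∀ i j, S' i = S' j)) ∧
    {z : EuclideanSpace ℝ (Fin r ⊕ Fin (d - r)) | IsLocalMax Φt z} =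
      {z : EuclideanSpace ℝ (Fin r ⊕ Fin (d - r)) |
        IsLocalMax G (WithLp.toLp 2 (fun i => z (Sum.inl i))) ∧ ∀ j, z (Sum.inr j) = 0} ∧
    ({u : EuclideanSpace ℝ (Fin r) | IsLocalMax G u}.Finite →
      {z : EuclideanSpace ℝ (Fin r ⊕ Fin (d - r)) | IsLocalMax Φt z}.Finite ∧
      {z : EuclideanSpace ℝ (Fin r ⊕ Fin (d - r)) | IsLocalMax Φt z}.ncard =
        {u : EuclideanSpace ℝ (Fin r) | IsLocalMax G u}.ncard) ∧
    ∀ u : EuclideanSpace ℝ (Fin r), IsLocalMax G u →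
      (∃ U ∈ nhds u, {w : EuclideanSpace ℝ (Fin r) | IsLocalMax G w} ∩ U = {u}) →
      ∃ V ∈ nhds ((WithLp.toLp 2 (Sum.elim u (fun _ => 0))) : EuclideanSpace ℝ (Fin r ⊕ Fin (d - r))),
        {z : EuclideanSpace ℝ (Fin r ⊕ Fin (d - r)) | IsLocalMax Φt z} ∩ V =
          {((WithLp.toLp 2 (Sum.elim u (fun _ => 0))) : EuclideanSpace ℝ (Fin r ⊕ Fin (d - r)))} := by
  obtain ⟨hα, hsum, hS, hGdef⟩ := hG
  have hkne : (Finset.univ : Finset (Fin k)).Nonempty :=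
    Finset.nonempty_of_sum_ne_zero (by rw [hsum]; exact one_ne_zero)
  have hGpos : ∀ u, 0 < G u := fun u => by
    rw [hGdef]
    exact Finset.sum_pos (fun i _ => mul_pos (hα i) (gaussianPdf_pos _ (hS i) u)) hkne
  have hγpos : ∀ v, 0 < gaussianPdf (0 : EuclideanSpace ℝ (Fin (d - r))) Θ v :=
    fun v => gaussianPdf_pos _ hΘ v
  -- the modal set equality
  have hmode : {z : EuclideanSpace ℝ (Fin r ⊕ Fin (d - r)) | IsLocalMax Φt z} =
      {z : EuclideanSpace ℝ (Fin r ⊕ Fin (d - r)) |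
        IsLocalMax G (WithLp.toLp 2 (fun i => z (Sum.inl i))) ∧ ∀ j, z (Sum.inr j) = 0} := by
    ext z
    simp only [Set.mem_setOf_eq]
    constructor
    · intro hz
      set u : EuclideanSpace ℝ (Fin r) := WithLp.toLp 2 (fun i => z (Sum.inl i)) with hu
      set v : EuclideanSpace ℝ (Fin (d - r)) := WithLp.toLp 2 (fun j => z (Sum.inr j)) with hvdef
      have hΦz : Φt z = G u * gaussianPdf 0 Θ v := hΦt z
      have hv0 : v = 0 := by
        by_contra hvne
        set q : EuclideanSpace ℝ (Fin r ⊕ Fin (d - r)) := WithLp.toLp 2 (Sum.elim 0 v) with hqdef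
        set c : ℝ → EuclideanSpace ℝ (Fin r ⊕ Fin (d - r)) := fun t => z + (t - 1) • q with hcdef
        have hcont : Continuous c := by
          apply continuous_const.add
          exact (continuous_id.sub continuous_const).smul continuous_const
        have hc1 : c 1 = z := by simp [hcdef]
        have htend : Filter.Tendsto c (nhds 1) (nhds z) := by
          rw [← hc1]; exact hcont.tendsto 1
        have hev : ∀ᶠ t in nhdsWithin 1 (Set.Iio 1), Φt (c t) ≤ Φt z :=
          (htend.eventually hz).filter_mono nhdsWithin_le_nhds
        have hio : ∀ᶠ t in nhdsWithin 1 (Set.Iio 1), t ∈ Set.Ioo (0:ℝ) 1 :=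
          Ioo_mem_nhdsLT_of_mem (by norm_num)
        obtain ⟨t, hle, ht0, ht1⟩ := (hev.and hio).exists
        have hcl : WithLp.toLp 2 (fun i => c t (Sum.inl i)) = u := by
          ext i; simp [hcdef, hqdef, PiLp.add_apply, PiLp.smul_apply, hu]
        have hcr : WithLp.toLp 2 (fun j => c t (Sum.inr j)) = t • v := by
          ext j
          simp [hcdef, hqdef, PiLp.add_apply, PiLp.smul_apply, hvdef]
          ring
        have hct : Φt (c t) = G u * gaussianPdf 0 Θ (t • v) := by
          rw [hΦt (c t), hcl, hcr]
        rw [hct, hΦz] at hle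
        have hlt := gaussianPdf_lt_scale hΘ hvne ht0 ht1
        nlinarith [hGpos u]
      have hzj : ∀ j, z (Sum.inr j) = 0 := fun j => by
        have := congrArg (fun w : EuclideanSpace ℝ (Fin (d - r)) => w j) hv0
        simpa [hvdef] using this
      refine ⟨?_, hzj⟩
      have heu : (WithLp.toLp 2 (Sum.elim u 0) : EuclideanSpace ℝ (Fin r ⊕ Fin (d - r))) = z := by
        ext w
        cases w with
        | inl i => rfl
        | inr j => exact (hzj j).symm
      have htend2 : Filter.Tendsto
          (fun w : EuclideanSpace ℝ (Fin r) =>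
            (WithLp.toLp 2 (Sum.elim w 0) : EuclideanSpace ℝ (Fin r ⊕ Fin (d - r))))
          (nhds u) (nhds z) := by
        rw [← heu]; exact continuous_sumElimL.tendsto u
      have hev2 := htend2.eventually hz
      refine hev2.mono fun w hw => ?_
      have h1 : Φt (WithLp.toLp 2 (Sum.elim w 0) : EuclideanSpace ℝ (Fin r ⊕ Fin (d - r))) =
          G w * gaussianPdf 0 Θ (0 : EuclideanSpace ℝ (Fin (d - r))) := hΦt _
      have h2 : Φt z = G u * gaussianPdf 0 Θ (0 : EuclideanSpace ℝ (Fin (d - r))) := by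
        rw [hΦz, hv0]
      rw [h1, h2] at hw
      exact le_of_mul_le_mul_right hw (hγpos 0)
    · rintro ⟨hmax, hzero⟩
      have hvz : WithLp.toLp 2 (fun j => z (Sum.inr j)) = (0 : EuclideanSpace ℝ (Fin (d - r))) := by
        ext j; simpa using hzero j
      have h1 : ∀ᶠ y in nhds z,
          G (WithLp.toLp 2 (fun i => y (Sum.inl i))) ≤ G (WithLp.toLp 2 (fun i => z (Sum.inl i))) :=
        (continuous_projL.tendsto z).eventually hmax
      refine h1.mono fun y hy => ?_
      rw [hΦt y, hΦt z, hvz]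
      exact mul_le_mul hy (gaussianPdf_le_center hΘ _) (hγpos _).le (hGpos _).le
  refine ⟨?_, hmode, ?_, ?_⟩
  · -- mixture structure
    refine ⟨α, fun i => (WithLp.toLp 2 (Sum.elim (μ i) 0) : EuclideanSpace ℝ (Fin r ⊕ Fin (d - r))),
      fun i => Matrix.fromBlocks (S i) 0 0 Θ,
      ⟨hα, hsum, fun i => posDef_fromBlocks (hS i) hΘ, ?_⟩, ?_⟩
    · intro z
      rw [hΦt z, hGdef]
      unfold mixturePdf
      rw [Finset.sum_mul]
      refine Finset.sum_congr rfl fun i _ => ?_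
      rw [mul_assoc, ← gaussianPdf_prod (μ i) (hS i) 0 hΘ z]
      rfl
    · intro h i j
      show Matrix.fromBlocks (S i) 0 0 Θ = Matrix.fromBlocks (S j) 0 0 Θ
      rw [h i j]
  · -- finiteness
    intro hfin
    have himg : {z : EuclideanSpace ℝ (Fin r ⊕ Fin (d - r)) | IsLocalMax Φt z} =
        (fun u : EuclideanSpace ℝ (Fin r) =>
          (WithLp.toLp 2 (Sum.elim u fun _ => 0) : EuclideanSpace ℝ (Fin r ⊕ Fin (d - r)))) ''
          {u : EuclideanSpace ℝ (Fin r) | IsLocalMax G u} := by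
      rw [hmode]
      ext z
      simp only [Set.mem_setOf_eq, Set.mem_image]
      constructor
      · rintro ⟨h1, h2⟩
        refine ⟨_, h1, ?_⟩
        ext w
        cases w with
        | inl i => rfl
        | inr j => exact (h2 j).symm
      · rintro ⟨u, hu, rfl⟩
        exact ⟨hu, fun j => rfl⟩
    have hinj : Function.Injective (fun u : EuclideanSpace ℝ (Fin r) =>
        (WithLp.toLp 2 (Sum.elim u fun _ => 0) : EuclideanSpace ℝ (Fin r ⊕ Fin (d - r)))) := by
      intro a b h
      ext i
      exact congrArg (fun w : EuclideanSpace ℝ (Fin r ⊕ Fin (d - r)) => w (Sum.inl i)) h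
    constructor
    · rw [himg]; exact hfin.image _
    · rw [himg, Set.ncard_image_of_injective _ hinj]
  · -- isolated modes
    rintro u hu ⟨U, hU, hUeq⟩
    refine ⟨(fun z : EuclideanSpace ℝ (Fin r ⊕ Fin (d - r)) =>
      (WithLp.toLp 2 (fun i => z (Sum.inl i)) : EuclideanSpace ℝ (Fin r))) ⁻¹' U, ?_, ?_⟩
    · exact continuous_projL.continuousAt.preimage_mem_nhds hU
    · rw [hmode]
      ext z
      simp only [Set.mem_inter_iff, Set.mem_setOf_eq, Set.mem_preimage,
        Set.mem_singleton_iff]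
      constructor
      · rintro ⟨⟨h1, h2⟩, h3⟩
        have hm : (WithLp.toLp 2 (fun i => z (Sum.inl i)) : EuclideanSpace ℝ (Fin r)) ∈
            {w : EuclideanSpace ℝ (Fin r) | IsLocalMax G w} ∩ U := ⟨h1, h3⟩
        rw [hUeq, Set.mem_singleton_iff] at hm
        ext w
        cases w with
        | inl i => exact congrArg (fun w : EuclideanSpace ℝ (Fin r) => w i) hm
        | inr j => exact h2 j
      · rintro rfl
        have huU : u ∈ U := by
          have : u ∈ {w : EuclideanSpace ℝ (Fin r) | IsLocalMax G w} ∩ U := by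
            rw [hUeq]; exact rfl
          exact this.2
        exact ⟨⟨hu, fun j => rfl⟩, huU⟩
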